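/- Tverberg's theorem: for any integers f ≥ 0 and d ≥ 1, every multiset Y of at least (d+1)f + 1 points in ℝ^d can be partitioned into f+1 nonempty multisets Y_1, ..., Y_{f+1} such that the intersection of their convex hulls is nonempty. -/

import Mathlib

open Finset Module

local notation "⟪" x ", " y "⟫" => @inner ℝ _ _ x y

lemma min_inner {V : Type*} [NormedAddCommGroup V] [InnerProductSpace ℝ V]
    {K : Set V} (hK : Convex ℝ K) {x w : V} (hx : x ∈ K) (hw : w ∈ K)
    (hmin : ∀ z ∈ K, ‖x‖ ≤ ‖z‖) : ‖x‖ ^ 2 ≤ ⟪x, w⟫ := by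
  by_contra h
  push_neg at h
  set u := w - x with hu
  have hixu : ⟪x, u⟫ < 0 := by
    rw [hu, inner_sub_right]
    have : ⟪x, x⟫ = ‖x‖ ^ 2 := real_inner_self_eq_norm_sq x
    linarith
  have hune : u ≠ 0 := by
    intro h0
    rw [h0, inner_zero_right] at hixu; linarith
  have hnu : (0:ℝ) < ‖u‖ ^ 2 := pow_pos (norm_pos_iff.mpr hune) 2
  set t : ℝ := min 1 (-⟪x, u⟫ / ‖u‖ ^ 2) with ht
  have ht0 : 0 < t := lt_min one_pos (div_pos (by linarith) hnu)
  have ht1 : t ≤ 1 := min_le_left _ _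
  have htle : t * ‖u‖ ^ 2 ≤ -⟪x, u⟫ := by
    have := min_le_right 1 (-⟪x, u⟫ / ‖u‖ ^ 2)
    calc t * ‖u‖ ^ 2 ≤ (-⟪x, u⟫ / ‖u‖ ^ 2) * ‖u‖ ^ 2 := by
          apply mul_le_mul_of_nonneg_right _ hnu.le
          exact this
      _ = -⟪x, u⟫ := by field_simp
  have hpK : x + t • u ∈ K := by
    have := hK hx hw (by linarith : (0:ℝ) ≤ 1 - t) ht0.le (by ring)
    convert this using 1
    rw [hu]
    module
  have hnp := hmin _ hpK
  have hsq : ‖x‖ ^ 2 ≤ ‖x + t • u‖ ^ 2 := by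
    have := norm_nonneg x
    nlinarith
  have hexp : ‖x + t • u‖ ^ 2 = ‖x‖ ^ 2 + 2 * (t * ⟪x, u⟫) + t ^ 2 * ‖u‖ ^ 2 := by
    rw [norm_add_sq_real, real_inner_smul_right, norm_smul]
    simp [abs_of_nonneg ht0.le]
    ring
  nlinarith [mul_le_mul_of_nonneg_left htle ht0.le]

lemma colorful_caratheodory {V : Type*} [NormedAddCommGroup V] [InnerProductSpace ℝ V]
    [FiniteDimensional ℝ V] {n : ℕ} (hn : finrank ℝ V < n)
    (C : Fin n → Finset V) (hC : ∀ i, (0 : V) ∈ convexHull ℝ (C i : Set V)) :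
    ∃ g : Fin n → V, (∀ i, g i ∈ C i) ∧ (0 : V) ∈ convexHull ℝ (Set.range g) := by
  classical
  have hne : ∀ i, ∃ y, y ∈ C i := by
    intro i
    have := (convexHull_nonempty_iff (𝕜 := ℝ)).mp ⟨0, hC i⟩
    exact this.imp fun y hy => hy
  -- the type of selections
  haveI : Nonempty (Fin n) := ⟨⟨0, by omega⟩⟩
  let G := ∀ i : Fin n, {y // y ∈ C i}
  haveI : Nonempty G := ⟨fun i => ⟨(hne i).choose, (hne i).choose_spec⟩⟩
  let K : G → Set V := fun g => convexHull ℝ (Set.range fun i => (g i : V))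
  have hKconv : ∀ g, Convex ℝ (K g) := fun g => convex_convexHull _ _
  have hKcomp : ∀ g, IsCompact (K g) := fun g => (Set.finite_range _).isCompact_convexHull ℝ
  have hKne : ∀ g : G, (K g).Nonempty := fun g =>
    (convexHull_nonempty_iff (𝕜 := ℝ)).mpr (Set.range_nonempty _)
  let A : Set V := ⋃ g : G, K g
  have hAcomp : IsCompact A := isCompact_iUnion hKcomp
  have hAne : A.Nonempty := by
    obtain ⟨g⟩ := ‹Nonempty G›
    exact (hKne g).mono (Set.subset_iUnion K g)
  obtain ⟨x, hxA, hxmin⟩ := hAcomp.exists_isMinOn hAne continuous_norm.continuousOn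
  have hxmin' : ∀ z ∈ A, ‖x‖ ≤ ‖z‖ := fun z hz => hxmin hz
  obtain ⟨g, hxg⟩ : ∃ g : G, x ∈ K g := Set.mem_iUnion.mp hxA
  -- claim x = 0
  have hx0 : x = 0 := by
    by_contra hx0
    have hxsq : (0:ℝ) < ‖x‖ ^ 2 := pow_pos (norm_pos_iff.mpr hx0) 2
    obtain ⟨ι', hfin, z, w, hz_range, hz_ai, hw_pos, hw_sum, hw_eq⟩ :=
      eq_pos_convex_span_of_mem_convexHull hxg
    letI := hfin
    have hKgmin : ∀ p ∈ K g, ‖x‖ ^ 2 ≤ ⟪x, p⟫ := fun p hp =>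
      min_inner (hKconv g) hxg hp (fun z hz => hxmin' z (Set.mem_iUnion.mpr ⟨g, hz⟩))
    have hz_in : ∀ k, z k ∈ K g := fun k =>
      subset_convexHull ℝ _ (hz_range (Set.mem_range_self k))
    -- every z k lies on the supporting hyperplane
    have hsupp : ∀ k, ⟪x, z k⟫ = ‖x‖ ^ 2 := by
      have hsum : ∑ k, w k * (⟪x, z k⟫ - ‖x‖ ^ 2) = 0 := by
        have h1 : ⟪x, ∑ k, w k • z k⟫ = ‖x‖ ^ 2 := by
          rw [hw_eq, real_inner_self_eq_norm_sq]
        rw [inner_sum] at h1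
        simp only [real_inner_smul_right] at h1
        have h2 : ∑ k, w k * ‖x‖ ^ 2 = ‖x‖ ^ 2 := by
          rw [← Finset.sum_mul, hw_sum, one_mul]
        simp only [mul_sub]
        rw [Finset.sum_sub_distrib, h1, h2, sub_self]
      intro k
      have hterm : ∀ k ∈ Finset.univ (α := ι'), 0 ≤ w k * (⟪x, z k⟫ - ‖x‖ ^ 2) :=
        fun k _ => mul_nonneg (hw_pos k).le (by linarith [hKgmin _ (hz_in k)])
      have := (Finset.sum_eq_zero_iff_of_nonneg hterm).mp hsum k (Finset.mem_univ k)
      rcases mul_eq_zero.mp this with h | h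
      · exact absurd h (hw_pos k).ne'
      · linarith
    haveI : Nonempty ι' := by
      by_contra hemp
      rw [not_nonempty_iff] at hemp
      rw [Finset.univ_eq_empty, Finset.sum_empty] at hw_sum
      exact one_ne_zero hw_sum.symm
    -- bound on the number of points used
    have hcard : Fintype.card ι' ≤ finrank ℝ V := by
      set φ : V →ₗ[ℝ] ℝ := (innerSL ℝ x : V →L[ℝ] ℝ).toLinearMap with hφ
      have hφx : ∀ v, φ v = ⟪x, v⟫ := fun v => rfl
      have hker : vectorSpan ℝ (Set.range z) ≤ LinearMap.ker φ := by
        rw [vectorSpan_def]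
        rw [Submodule.span_le]
        rintro v ⟨p, hp, q, hq, rfl⟩
        obtain ⟨k, rfl⟩ := hp
        obtain ⟨k', rfl⟩ := hq
        simp only [SetLike.mem_coe, LinearMap.mem_ker, vsub_eq_sub]
        rw [hφx, inner_sub_right, hsupp k, hsupp k', sub_self]
      have hsurj : LinearMap.range φ = ⊤ := by
        rw [LinearMap.range_eq_top]
        intro r
        refine ⟨(r / ‖x‖ ^ 2) • x, ?_⟩
        rw [hφx, real_inner_smul_right, real_inner_self_eq_norm_sq]
        field_simp
      have hrk : finrank ℝ (LinearMap.range φ) = 1 := by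
        rw [hsurj, finrank_top]
        exact finrank_self ℝ
      have hdim := φ.finrank_range_add_finrank_ker
      have h1 : Fintype.card ι' = finrank ℝ (vectorSpan ℝ (Set.range z)) + 1 :=
        (hz_ai.finrank_vectorSpan_add_one).symm
      have h2 : finrank ℝ (vectorSpan ℝ (Set.range z)) ≤ finrank ℝ (LinearMap.ker φ) :=
        Submodule.finrank_mono hker
      omega
    -- choice of colors
    have hc : ∀ k : ι', ∃ i : Fin n, (g i : V) = z k := fun k => hz_range ⟨k, rfl⟩
    choose c hc using hc
    -- there is an unused color
    obtain ⟨i₀, hi₀⟩ : ∃ i₀ : Fin n, i₀ ∉ Finset.image c Finset.univ := by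
      by_contra hall
      push_neg at hall
      have : (Finset.univ : Finset (Fin n)) ⊆ Finset.image c Finset.univ :=
        fun i _ => hall i
      have h1 := Finset.card_le_card this
      have h2 := Finset.card_image_le (f := c) (s := Finset.univ)
      simp only [Finset.card_univ, Fintype.card_fin] at h1 h2
      omega
    -- a point of C i₀ in the opposite halfspace
    obtain ⟨q, hqC, hqx⟩ : ∃ q ∈ C i₀, ⟪x, q⟫ ≤ 0 := by
      by_contra hq
      push_neg at hq
      have hlin : IsLinearMap ℝ (fun v : V => ⟪x, v⟫) :=
        ⟨fun a b => inner_add_right x a b, fun r a => real_inner_smul_right x a r⟩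
      have hsub : (C i₀ : Set V) ⊆ {v : V | (0:ℝ) < ⟪x, v⟫} := fun v hv => hq v hv
      have := convexHull_min hsub (convex_halfSpace_gt hlin 0) (hC i₀)
      simp only [Set.mem_setOf_eq, inner_zero_right] at this
      exact lt_irrefl _ this
    -- the improved selection
    let g' : G := fun i => if h : i = i₀ then h ▸ (⟨q, hqC⟩ : {y // y ∈ C i₀}) else g i
    have hg'q : (g' i₀ : V) = q := by simp [g']
    have hg'g : ∀ i, i ≠ i₀ → g' i = g i := fun i hi => by simp [g', hi]
    have hxKg' : x ∈ K g' := by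
      refine mem_convexHull_of_exists_fintype w z (fun k => (hw_pos k).le) hw_sum ?_ hw_eq
      intro k
      have hck : c k ≠ i₀ := by
        intro h
        exact hi₀ (h ▸ Finset.mem_image_of_mem c (Finset.mem_univ k))
      exact ⟨c k, by show ((g' (c k) : V)) = z k; rw [hg'g _ hck, hc k]⟩
    have hqKg' : q ∈ K g' := subset_convexHull ℝ _ ⟨i₀, hg'q⟩
    have := min_inner (hKconv g') hxKg' hqKg'
      (fun z hz => hxmin' z (Set.mem_iUnion.mpr ⟨g', hz⟩))
    linarith
  exact ⟨fun i => (g i : V), fun i => (g i).2, hx0 ▸ hxg⟩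

theorem stmt_2 (d f : ℕ) (hd : 1 ≤ d)
    (Y : Multiset (EuclideanSpace ℝ (Fin d)))
    (hY : (d + 1) * f + 1 ≤ Multiset.card Y) :
    ∃ P : Fin (f + 1) → Multiset (EuclideanSpace ℝ (Fin d)),
      (∀ l, P l ≠ 0) ∧ (∑ l, P l = Y) ∧
      (⋂ l, convexHull ℝ {x | x ∈ P l}).Nonempty := by
  classical
  set L : List (EuclideanSpace ℝ (Fin d)) := Y.toList with hLdef
  have hLY : (L : Multiset (EuclideanSpace ℝ (Fin d))) = Y := Multiset.coe_toList Y
  have hLlen : (d + 1) * f + 1 ≤ L.length := by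
    rw [Multiset.length_toList]; exact hY
  set n := L.length with hn
  let a : Fin n → EuclideanSpace ℝ (Fin d) := L.get
  -- lifted points
  let ha : Fin n → Fin (d + 1) → ℝ := fun i k => if h : (k : ℕ) < d then a i ⟨k, h⟩ else 1
  -- the vectors v_j
  let v : Fin (f + 1) → Fin f → ℝ := fun j l =>
    (if j = Fin.castSucc l then 1 else 0) - (if j = Fin.last f then 1 else 0)
  have hv_sum : ∀ l : Fin f, ∑ j, v j l = 0 := by
    intro l
    simp only [v, Finset.sum_sub_distrib]
    rw [Finset.sum_ite_eq' Finset.univ (Fin.castSucc l) (fun _ => (1:ℝ)),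
      Finset.sum_ite_eq' Finset.univ (Fin.last f) (fun _ => (1:ℝ))]
    simp
  -- the tensor points
  let V := EuclideanSpace ℝ (Fin (d + 1) × Fin f)
  let b : Fin n → Fin (f + 1) → V := fun i j => WithLp.toLp 2 (fun p => ha i p.1 * v j p.2 :
    (Fin (d + 1) × Fin f) → ℝ)
  have hbapp : ∀ i j p, b i j p = ha i p.1 * v j p.2 := fun _ _ _ => rfl
  let π : (Fin (d + 1) × Fin f) → (V →ₗ[ℝ] ℝ) := fun p => PiLp.projₗ 2 _ p
  have hπ : ∀ (p) (u : V), π p u = u p := fun _ _ => rfl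
  have hdim : finrank ℝ V < n := by
    have : finrank ℝ V = (d + 1) * f := by
      rw [finrank_euclideanSpace]; simp
    omega
  let C : Fin n → Finset V := fun i => Finset.image (b i) Finset.univ
  have hC : ∀ i, (0 : V) ∈ convexHull ℝ (C i : Set V) := by
    intro i
    refine mem_convexHull_of_exists_fintype (fun _ : Fin (f + 1) => ((f : ℝ) + 1)⁻¹) (b i)
      (fun _ => by positivity) ?_ (fun j => Finset.mem_coe.mpr (Finset.mem_image_of_mem _
        (Finset.mem_univ j))) ?_
    · rw [Finset.sum_const]
      simp only [Finset.card_univ, Fintype.card_fin, nsmul_eq_mul]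
      have : ((f : ℝ) + 1) ≠ 0 := by positivity
      push_cast
      field_simp
    · rw [← Finset.smul_sum]
      have hzero : ∑ j, b i j = 0 := by
        ext p
        have h1 : (∑ j, b i j) p = ∑ j, b i j p := map_sum (π p) (b i) Finset.univ
        rw [h1]
        simp only [hbapp, ← Finset.sum_mul ]
        rw [show ∑ j, ha i p.1 * v j p.2 = ha i p.1 * ∑ j, v j p.2 from
          (Finset.mul_sum _ _ _).symm, hv_sum, mul_zero]
        rfl
      rw [hzero, smul_zero]
  obtain ⟨g, hg, h0⟩ := colorful_caratheodory hdim C hC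
  -- choose colors
  have hj : ∀ i, ∃ jj : Fin (f + 1), b i jj = g i := by
    intro i
    obtain ⟨jj, _, h⟩ := Finset.mem_image.mp (hg i)
    exact ⟨jj, h⟩
  choose j hj using hj
  -- extract weights indexed by Fin n
  obtain ⟨ι', hfin, z, w, hz_range, hz_ai, hw_pos, hw_sum, hw_eq⟩ :=
    eq_pos_convex_span_of_mem_convexHull h0
  letI := hfin
  have hc : ∀ k : ι', ∃ i : Fin n, g i = z k := fun k => hz_range ⟨k, rfl⟩
  choose c hc using hc
  let lam : Fin n → ℝ := fun i => ∑ k, if c k = i then w k else 0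
  have hlam0 : ∀ i, 0 ≤ lam i := fun i =>
    Finset.sum_nonneg fun k _ => by split <;> simp [(hw_pos k).le]
  have hlam_sum : ∑ i, lam i = 1 := by
    simp only [lam]
    rw [Finset.sum_comm]
    calc (∑ k : ι', ∑ i, if c k = i then w k else 0)
        = ∑ k : ι', w k := by
          refine Finset.sum_congr rfl fun k _ => ?_
          rw [Finset.sum_ite_eq Finset.univ (c k) (fun _ => w k)]
          simp
      _ = 1 := hw_sum
  have hlam_eq : ∑ i, lam i • g i = 0 := by
    calc ∑ i, lam i • g i
        = ∑ i, ∑ k, (if c k = i then w k • g i else 0) := by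
          refine Finset.sum_congr rfl fun i _ => ?_
          rw [show lam i • g i = (∑ k, if c k = i then w k else 0) • g i from rfl,
            Finset.sum_smul]
          refine Finset.sum_congr rfl fun k _ => ?_
          split <;> simp
      _ = ∑ k : ι', ∑ i, (if c k = i then w k • g i else 0) := Finset.sum_comm
      _ = ∑ k : ι', w k • z k := by
          refine Finset.sum_congr rfl fun k _ => ?_
          rw [Finset.sum_ite_eq Finset.univ (c k) (fun i => w k • g i)]
          simp [hc k]
      _ = 0 := hw_eq
  -- coordinate equations
  have key : ∀ p : Fin (d + 1) × Fin f, ∑ i, lam i * (ha i p.1 * v (j i) p.2) = 0 := by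
    intro p
    have h1 := congrArg (π p) hlam_eq
    rw [map_sum, map_zero] at h1
    rw [← h1]
    refine Finset.sum_congr rfl fun i _ => ?_
    rw [map_smul, smul_eq_mul, hπ p (g i), ← hj i, hbapp]
  -- the classes
  let T : Fin (f + 1) → Finset (Fin n) := fun cc => Finset.univ.filter (fun i => j i = cc)
  have key2 : ∀ (cc : Fin (f + 1)) (k : Fin (d + 1)),
      ∑ i ∈ T cc, lam i * ha i k = ∑ i ∈ T (Fin.last f), lam i * ha i k := by
    intro cc k
    rcases Fin.eq_castSucc_or_eq_last cc with ⟨l, rfl⟩ | rfl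
    · have h1 := key (k, l)
      have h2 : ∀ i : Fin n, lam i * (ha i k * v (j i) l) =
          (if j i = Fin.castSucc l then lam i * ha i k else 0)
          - (if j i = Fin.last f then lam i * ha i k else 0) := by
        intro i
        simp only [v]
        split_ifs <;> ring
      simp only [h2, Finset.sum_sub_distrib] at h1
      rw [← Finset.sum_filter, ← Finset.sum_filter] at h1
      have := sub_eq_zero.mp h1
      exact this
    · rfl
  let wc : Fin (f + 1) → ℝ := fun cc => ∑ i ∈ T cc, lam i
  have hha_last : ∀ i, ha i (Fin.last d) = 1 := by
    intro i
    simp only [ha]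
    rw [dif_neg]
    simp [Fin.last]
  have hwc_eq : ∀ cc, wc cc = wc (Fin.last f) := by
    intro cc
    have := key2 cc (Fin.last d)
    simpa only [hha_last, mul_one] using this
  have hwc_sum : ∑ cc, wc cc = 1 := by
    rw [show ∑ cc, wc cc = ∑ i, lam i from Finset.sum_fiberwise Finset.univ j lam]
    exact hlam_sum
  have hwc_pos : ∀ cc, 0 < wc cc := by
    have h1 : ((f : ℝ) + 1) * wc (Fin.last f) = 1 := by
      have h2 : ∑ cc, wc cc = (f + 1) • wc (Fin.last f) := by
        rw [Finset.sum_congr rfl fun cc _ => hwc_eq cc, Finset.sum_const,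
          Finset.card_univ, Fintype.card_fin]
      have h3 := hwc_sum
      rw [h2, nsmul_eq_mul] at h3
      push_cast at h3
      linarith
    intro cc
    rw [hwc_eq cc]
    nlinarith [h1]
  -- common point
  have hS_eq : ∀ cc, ∑ i ∈ T cc, lam i • a i = ∑ i ∈ T (Fin.last f), lam i • a i := by
    intro cc
    ext m
    have hπd : ∀ (s : Finset (Fin n)) (F : Fin n → EuclideanSpace ℝ (Fin d)),
        (∑ i ∈ s, F i) m = ∑ i ∈ s, F i m :=
      fun s F => map_sum (PiLp.projₗ 2 (fun _ : Fin d => ℝ) m : EuclideanSpace ℝ (Fin d) →ₗ[ℝ] ℝ) F s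
    rw [hπd, hπd]
    have hham : ∀ i : Fin n, ha i (Fin.castSucc m) = a i m := by
      intro i
      simp only [ha]
      rw [dif_pos (by simpa using m.isLt)]
      rfl
    calc ∑ i ∈ T cc, (lam i • a i) m = ∑ i ∈ T cc, lam i * ha i (Fin.castSucc m) := by
          refine Finset.sum_congr rfl fun i _ => ?_
          rw [hham]
          rfl
      _ = ∑ i ∈ T (Fin.last f), lam i * ha i (Fin.castSucc m) := key2 cc _
      _ = ∑ i ∈ T (Fin.last f), (lam i • a i) m := by
          refine Finset.sum_congr rfl fun i _ => ?_
          rw [hham]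
          rfl
  let x0 : EuclideanSpace ℝ (Fin d) := (T (Fin.last f)).centerMass lam a
  have hcm : ∀ cc, (T cc).centerMass lam a = x0 := by
    intro cc
    show (T cc).centerMass lam a = (T (Fin.last f)).centerMass lam a
    unfold Finset.centerMass
    rw [show ∑ i ∈ T cc, lam i = ∑ i ∈ T (Fin.last f), lam i from hwc_eq cc, hS_eq cc]
  -- the partition
  refine ⟨fun cc => Multiset.map a (T cc).val, ?_, ?_, ?_⟩
  · intro cc
    intro hzero
    rw [Multiset.map_eq_zero] at hzero
    have hTcc : T cc = ∅ := Finset.val_eq_zero.mp hzero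
    have := hwc_pos cc
    rw [show wc cc = ∑ i ∈ T cc, lam i from rfl, hTcc, Finset.sum_empty] at this
    exact lt_irrefl _ this
  · calc ∑ cc, Multiset.map a (T cc).val
        = Multiset.map a (∑ cc, (T cc).val) :=
          (map_sum (Multiset.mapAddMonoidHom a) (fun cc => (T cc).val) Finset.univ).symm
      _ = Multiset.map a Finset.univ.val := by
          congr 1
          calc ∑ cc, (T cc).val = ∑ cc, ∑ i ∈ T cc, ({i} : Multiset (Fin n)) := by
                refine Finset.sum_congr rfl fun cc _ => ?_
                rw [Finset.sum_multiset_singleton]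
            _ = ∑ i, ({i} : Multiset (Fin n)) :=
                Finset.sum_fiberwise Finset.univ j (fun i => ({i} : Multiset (Fin n)))
            _ = Finset.univ.val := Finset.sum_multiset_singleton _
      _ = Y := by
          rw [Fin.univ_def]
          show Multiset.map a (List.finRange n : Multiset (Fin n)) = Y
          rw [Multiset.map_coe]
          rw [show (List.finRange n).map a = L from List.map_get_finRange L]
          exact hLY
  · refine ⟨x0, Set.mem_iInter.mpr fun cc => ?_⟩
    rw [← hcm cc]
    refine Finset.centerMass_mem_convexHull (T cc) (fun i _ => hlam0 i) ?_ ?_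
    · exact hwc_pos cc
    · intro i hi
      exact Multiset.mem_map.mpr ⟨i, Finset.mem_val.mpr hi, rfl⟩
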